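/- The map Φ^B: Q_n → P^B_{2n+1} is monotone: if (ρ;σ) ≤ (μ;ν) in the interleaved dominance order on bipartitions of n, then Φ^B(ρ;σ) ≤ Φ^B(μ;ν) in the dominance order on partitions of 2n+1. -/
import Mathlib


open Finset

/-- Partial sum of the first `k` terms of a sequence of naturals. -/
def psum (π : ℕ → ℕ) (k : ℕ) : ℕ := ∑ i ∈ Finset.range k, π i

/-- A composition of `n`: almost all terms zero, summing to `n`. -/
def IsComposition (n : ℕ) (π : ℕ → ℕ) : Prop :=
  ∃ N, (∀ i, N ≤ i → π i = 0) ∧ psum π N = n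

/-- Dominance order: `l` dominates `π`. -/
def Dominates (l π : ℕ → ℕ) : Prop := ∀ k, psum π k ≤ psum l k

/-- A partition: weakly decreasing sequence. -/
def IsPartition (π : ℕ → ℕ) : Prop := ∀ i, π (i + 1) ≤ π i

/-- A quasi-partition: `π i ≥ π (i+2)` for all `i`. -/
def IsQuasiPartition (π : ℕ → ℕ) : Prop := ∀ i, π (i + 2) ≤ π i

/-- Interleaving of two sequences: `(ρ₁, σ₁, ρ₂, σ₂, …)` (0-indexed). -/
def interleave (ρ σ : ℕ → ℕ) (i : ℕ) : ℕ :=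
  if i % 2 = 0 then ρ (i / 2) else σ (i / 2)

/-- A bipartition of `n`: a pair of partitions whose interleaving sums to `n`. -/
def IsBipartition (n : ℕ) (ρ σ : ℕ → ℕ) : Prop :=
  IsPartition ρ ∧ IsPartition σ ∧ IsComposition n (interleave ρ σ)

/-- Interleaved dominance order on bipartitions: `(ρ;σ) ≤ (μ;ν)`. -/
def BiLE (ρ σ μ ν : ℕ → ℕ) : Prop :=
  Dominates (interleave μ ν) (interleave ρ σ)

/-- The map `Φ^C` on sequences: replace a consecutive pair `2s < 2t`
by `s+t, s+t` (pointwise description; replacements never overlap for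
quasi-partitions). -/
def phiC (π : ℕ → ℕ) : ℕ → ℕ
  | 0 => if π 0 < π 1 then (π 0 + π 1) / 2 else π 0
  | (j + 1) =>
      if π (j + 1) < π (j + 2) then (π (j + 1) + π (j + 2)) / 2
      else if π j < π (j + 1) then (π j + π (j + 1)) / 2
      else π (j + 1)

/-- `Φ^C` of a bipartition: apply `phiC` to the doubled interleaving. -/
def PhiC (ρ σ : ℕ → ℕ) : ℕ → ℕ := phiC (fun i => 2 * interleave ρ σ i)

/-- Membership in `P^C_{2n}`: partition of `2n` with every odd part of even
multiplicity. -/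
def IsPC (n : ℕ) (l : ℕ → ℕ) : Prop :=
  IsPartition l ∧ IsComposition (2 * n) l ∧
    ∀ a : ℕ, Odd a → Even ({i | l i = a}.ncard)

/-- C-distinguished: `μ i ≥ ν i - 1` and `ν i ≥ μ (i+1) - 1`. -/
def QC (μ ν : ℕ → ℕ) : Prop :=
  ∀ i, ν i ≤ μ i + 1 ∧ μ (i + 1) ≤ ν i + 1

/-- B-distinguished: `μ i ≥ ν i - 2` and `ν i ≥ μ (i+1)`. -/
def QB (μ ν : ℕ → ℕ) : Prop :=
  ∀ i, ν i ≤ μ i + 2 ∧ μ (i + 1) ≤ ν i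

/-- Special: `μ i ≥ ν i - 1` and `ν i ≥ μ (i+1)`. -/
def QS (μ ν : ℕ → ℕ) : Prop :=
  ∀ i, ν i ≤ μ i + 1 ∧ μ (i + 1) ≤ ν i

/-- The condition defining `Q_n^{B,2}`: `μ i ≥ ν i - 2`. -/
def QB2 (μ ν : ℕ → ℕ) : Prop := ∀ i, ν i ≤ μ i + 2

/-- For an antitone sequence, the starting index of the run of equal values
containing index `i`. -/
noncomputable def runStart (l : ℕ → ℕ) (i : ℕ) : ℕ := {j | l i < l j}.ncard

/-- The map `Φ̂^C`, pointwise: halve even parts; replace an (even-length)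
maximal run of an odd part `2k+1` with `k, k+1, k, k+1, …`. -/
noncomputable def hphiC (l : ℕ → ℕ) (i : ℕ) : ℕ :=
  if Even (l i) then l i / 2
  else if Even (i - runStart l i) then l i / 2 else l i / 2 + 1

/-- Partial sums of an integer sequence. -/
def zsum (π : ℕ → ℤ) (k : ℕ) : ℤ := ∑ i ∈ Finset.range k, π i

/-- Dominance order on integer sequences. -/
def ZDominates (l π : ℕ → ℤ) : Prop := ∀ k, zsum π k ≤ zsum l k

/-- The interleaved integer sequence `(2ρ₁+1, 2σ₁−1, 2ρ₂+1, 2σ₂−1, …)`. -/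
def interB (ρ σ : ℕ → ℕ) (i : ℕ) : ℤ :=
  if i % 2 = 0 then 2 * (ρ (i / 2) : ℤ) + 1 else 2 * (σ (i / 2) : ℤ) - 1

/-- The map `Φ^B` on integer sequences: replace a consecutive pair `s < t`
by `(s+t)/2, (s+t)/2` (pointwise description). -/
def phiB (π : ℕ → ℤ) : ℕ → ℤ
  | 0 => if π 0 < π 1 then (π 0 + π 1) / 2 else π 0
  | (j + 1) =>
      if π (j + 1) < π (j + 2) then (π (j + 1) + π (j + 2)) / 2
      else if π j < π (j + 1) then (π j + π (j + 1)) / 2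
      else π (j + 1)

/-- `Φ^B` of a bipartition. -/
def PhiB (ρ σ : ℕ → ℕ) : ℕ → ℤ := phiB (interB ρ σ)

/-- Membership in `P^B_{2n+1}` for an integer sequence: nonnegative, weakly
decreasing, summing to `2n+1`, with every (positive) even part of even
multiplicity. -/
def IsPB (n : ℕ) (l : ℕ → ℤ) : Prop :=
  (∀ i, 0 ≤ l i) ∧ (∀ i, l (i + 1) ≤ l i) ∧
  (∃ N, (∀ i, N ≤ i → l i = 0) ∧ zsum l N = 2 * n + 1) ∧
  ∀ a : ℤ, 0 < a → Even a → Even ({i | l i = a}.ncard)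

/-- Membership in `P^B_{2n+1}` for a natural-number partition. -/
def IsPBN (n : ℕ) (l : ℕ → ℕ) : Prop :=
  IsPartition l ∧ IsComposition (2 * n + 1) l ∧
    ∀ a : ℕ, 0 < a → Even a → Even ({i | l i = a}.ncard)

/-- The map `Φ̂^B`, pointwise (0-indexed, so the paper's index `i` is `j+1`):
an odd part `λ_i` becomes `(λ_i + (−1)^i)/2`; a maximal run of an even part
`2k` starting at (0-indexed) position `s` becomes `k, k, …` if `s` is odd
(paper's `i` even) and `k−1, k+1, k−1, k+1, …` if `s` is even (paper's `i`
odd). -/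
noncomputable def hphiB (l : ℕ → ℕ) (j : ℕ) : ℕ :=
  if Odd (l j) then (if Even j then (l j - 1) / 2 else (l j + 1) / 2)
  else
    if Odd (runStart l j) then l j / 2
    else if Even (j - runStart l j) then l j / 2 - 1 else l j / 2 + 1

/-- First component of the special closure `(ρ;σ)°`. -/
def scRho (ρ σ : ℕ → ℕ) : ℕ → ℕ
  | 0 => if ρ 0 + 1 < σ 0 then (ρ 0 + σ 0) / 2 else ρ 0
  | (i + 1) =>
      if ρ (i + 1) + 1 < σ (i + 1) then (ρ (i + 1) + σ (i + 1)) / 2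
      else if σ i < ρ (i + 1) then (σ i + ρ (i + 1)) / 2
      else ρ (i + 1)

/-- Second component of the special closure `(ρ;σ)°`. -/
def scSigma (ρ σ : ℕ → ℕ) (i : ℕ) : ℕ :=
  if ρ i + 1 < σ i then (ρ i + σ i + 1) / 2
  else if σ i < ρ (i + 1) then (σ i + ρ (i + 1) + 1) / 2
  else σ i

/-- First component of the closure `(ρ;σ)~` into `Q_n^{B,2}`. -/
def tRho (ρ σ : ℕ → ℕ) (i : ℕ) : ℕ :=
  if ρ i + 2 < σ i then (ρ i + σ i + 1) / 2 - 1 else ρ i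

/-- Second component of the closure `(ρ;σ)~` into `Q_n^{B,2}`. -/
def tSigma (ρ σ : ℕ → ℕ) (i : ℕ) : ℕ :=
  if ρ i + 2 < σ i then (ρ i + σ i) / 2 + 1 else σ i

/-- First component of the closure `(ρ;σ)^B` into `Q_n^B`. -/
def bRho (ρ σ : ℕ → ℕ) : ℕ → ℕ
  | 0 => if ρ 0 + 2 < σ 0 then (ρ 0 + σ 0 + 1) / 2 - 1 else ρ 0
  | (i + 1) =>
      if ρ (i + 1) + 2 < σ (i + 1) then (ρ (i + 1) + σ (i + 1) + 1) / 2 - 1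
      else if σ i < ρ (i + 1) then (σ i + ρ (i + 1)) / 2
      else ρ (i + 1)

/-- Second component of the closure `(ρ;σ)^B` into `Q_n^B`. -/
def bSigma (ρ σ : ℕ → ℕ) (i : ℕ) : ℕ :=
  if ρ i + 2 < σ i then (ρ i + σ i) / 2 + 1
  else if σ i < ρ (i + 1) then (σ i + ρ (i + 1) + 1) / 2
  else σ i

/-- First component of the closure `(ρ;σ)^C` into `Q_n^C`. -/
def cRho (ρ σ : ℕ → ℕ) : ℕ → ℕ
  | 0 => if ρ 0 + 1 < σ 0 then (ρ 0 + σ 0) / 2 else ρ 0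
  | (i + 1) =>
      if ρ (i + 1) + 1 < σ (i + 1) then (ρ (i + 1) + σ (i + 1)) / 2
      else if σ i + 1 < ρ (i + 1) then (σ i + ρ (i + 1) + 1) / 2
      else ρ (i + 1)

/-- Second component of the closure `(ρ;σ)^C` into `Q_n^C`. -/
def cSigma (ρ σ : ℕ → ℕ) (i : ℕ) : ℕ :=
  if ρ i + 1 < σ i then (ρ i + σ i + 1) / 2
  else if σ i + 1 < ρ (i + 1) then (σ i + ρ (i + 1)) / 2
  else σ i

/-- Correction term: the amount by which partial sums of `phiB π` exceed
those of `π`. -/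
def ddB (π : ℕ → ℤ) : ℕ → ℤ
  | 0 => 0
  | (j + 1) => if π j < π (j + 1) then (π (j + 1) - π j) / 2 else 0

lemma zsum_succ' (π : ℕ → ℤ) (k : ℕ) : zsum π (k + 1) = zsum π k + π k := by
  simp [zsum, Finset.sum_range_succ]

lemma psum_succ' (π : ℕ → ℕ) (k : ℕ) : psum π (k + 1) = psum π k + π k := by
  simp [psum, Finset.sum_range_succ]

lemma sum_phiB (π : ℕ → ℤ) (hodd : ∀ i, π i % 2 = 1)
    (hq : ∀ i, π (i + 2) ≤ π i) (k : ℕ) :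
    zsum (phiB π) k = zsum π k + ddB π k := by
  induction k with
  | zero => simp [zsum, ddB]
  | succ k ih =>
    rw [zsum_succ', zsum_succ', ih]
    cases k with
    | zero =>
      have h0 := hodd 0
      have h1 := hodd 1
      have e : π (0 + 1) = π 1 := rfl
      simp only [phiB, ddB]
      split_ifs <;> omega
    | succ j =>
      have h0 := hodd j
      have h1 := hodd (j + 1)
      have h2 := hodd (j + 2)
      have hqj := hq j
      have e : π (j + 1 + 1) = π (j + 2) := rfl
      simp only [phiB, ddB]
      split_ifs <;> omega

lemma interB_odd (ρ σ : ℕ → ℕ) (i : ℕ) : interB ρ σ i % 2 = 1 := by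
  unfold interB
  split_ifs <;> omega

lemma interB_quasi (ρ σ : ℕ → ℕ) (hρ : IsPartition ρ) (hσ : IsPartition σ)
    (i : ℕ) : interB ρ σ (i + 2) ≤ interB ρ σ i := by
  unfold interB
  have e1 : (i + 2) % 2 = i % 2 := by omega
  have e2 : (i + 2) / 2 = i / 2 + 1 := by omega
  rw [e1, e2]
  split_ifs
  · have := hρ (i / 2); push_cast; omega
  · have := hσ (i / 2); push_cast; omega

lemma zsum_interB (ρ σ : ℕ → ℕ) (k : ℕ) :
    zsum (interB ρ σ) k = 2 * (psum (interleave ρ σ) k : ℤ) + (k % 2 : ℕ) := by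
  induction k with
  | zero => simp [zsum, psum]
  | succ k ih =>
    rw [zsum_succ', psum_succ', ih]
    have h : interB ρ σ k =
        2 * (interleave ρ σ k : ℤ) + (if k % 2 = 0 then 1 else -1) := by
      unfold interB interleave
      split_ifs <;> push_cast <;> ring
    rw [h]
    by_cases hk : k % 2 = 0
    · have e : (k + 1) % 2 = 1 := by omega
      rw [if_pos hk, hk, e]; push_cast; ring
    · have hk1 : k % 2 = 1 := by omega
      have e : (k + 1) % 2 = 0 := by omega
      rw [if_neg hk, hk1, e]; push_cast; ring

/-- `Φ^B : Q_n → P^B_{2n+1}` is monotone. -/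
theorem phiB_monotone (n : ℕ) (ρ σ μ ν : ℕ → ℕ)
    (h1 : IsBipartition n ρ σ) (h2 : IsBipartition n μ ν)
    (hle : BiLE ρ σ μ ν) :
    ZDominates (PhiB μ ν) (PhiB ρ σ) := by
  obtain ⟨hρ, hσ, -⟩ := h1
  obtain ⟨hμ, hν, -⟩ := h2
  set a := interB ρ σ with ha
  set b := interB μ ν with hb
  have hdom : ∀ k, zsum a k ≤ zsum b k := by
    intro k
    have h1 := hle k
    unfold Dominates at h1
    rw [ha, hb, zsum_interB, zsum_interB]
    omega
  intro k
  unfold PhiB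
  rw [← ha, ← hb, sum_phiB a (interB_odd ρ σ) (interB_quasi ρ σ hρ hσ),
    sum_phiB b (interB_odd μ ν) (interB_quasi μ ν hμ hν)]
  cases k with
  | zero => simpa [ddB] using hdom 0
  | succ j =>
    have oa0 := interB_odd ρ σ j
    have oa1 := interB_odd ρ σ (j + 1)
    have ob0 := interB_odd μ ν j
    have ob1 := interB_odd μ ν (j + 1)
    rw [← ha, ← hb] at *
    have ea1 := zsum_succ' a j
    have ea2 := zsum_succ' a (j + 1)
    have eb1 := zsum_succ' b j
    have eb2 := zsum_succ' b (j + 1)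
    have d0 := hdom j
    have d1 := hdom (j + 1)
    have d2 := hdom (j + 2)
    have r1 : zsum a (j + 1 + 1) = zsum a (j + 2) := rfl
    have r2 : zsum b (j + 1 + 1) = zsum b (j + 2) := rfl
    simp only [ddB]
    split_ifs <;> omega
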